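/- arXiv:1709.10005 — 3 statements merged into one kernel-verified Lean document; each statement's English description precedes it below -/
import Mathlib

section
/- Let N ≥ 2, 1 < p < ∞, p' = p/(p−1), α = (N−p)/(p−1), and fix R > 0. For ε > 0 define u^ε on the closed ball B̄_R of radius R centered at the origin of ℝ^N by u^ε(x) = (∫₀^π e^{√p'·(|x|/ε)·cos θ}(sin θ)^α dθ)/(∫₀^π e^{√p'·(R/ε)·cos θ}(sin θ)^α dθ). Then ε·log u^ε(x) → −√p'·(R−|x|) as ε → 0⁺, uniformly for x ∈ B̄_R. -/
open MeasureTheory Metric Set Filter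
open scoped Topology ENNReal NNReal Real Classical

noncomputable section

/-- The Hessian matrix of a real-valued function, via the second iterated Fréchet derivative. -/
noncomputable def hess {N : ℕ} (f : EuclideanSpace ℝ (Fin N) → ℝ) (x : EuclideanSpace ℝ (Fin N)) :
    Matrix (Fin N) (Fin N) ℝ :=
  fun i j => iteratedFDeriv ℝ 2 f x ![EuclideanSpace.single i 1, EuclideanSpace.single j 1]

/-- The quadratic form ⟨Xv, v⟩ associated to a matrix. -/
noncomputable def qform {N : ℕ} (X : Matrix (Fin N) (Fin N) ℝ) (v : EuclideanSpace ℝ (Fin N)) : ℝ :=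
  ∑ i, ∑ j, X i j * v j * v i

/-- Smallest eigenvalue (via the Rayleigh quotient) of a symmetric matrix. -/
noncomputable def lamMin {N : ℕ} (X : Matrix (Fin N) (Fin N) ℝ) : ℝ :=
  sInf {r | ∃ v : EuclideanSpace ℝ (Fin N), ‖v‖ = 1 ∧ r = qform X v}

/-- Largest eigenvalue (via the Rayleigh quotient) of a symmetric matrix. -/
noncomputable def lamMax {N : ℕ} (X : Matrix (Fin N) (Fin N) ℝ) : ℝ :=
  sSup {r | ∃ v : EuclideanSpace ℝ (Fin N), ‖v‖ = 1 ∧ r = qform X v}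

/-- F(ξ, X) = (1/p)[tr X + (p−2)⟨Xξ,ξ⟩/|ξ|²]. -/
noncomputable def Fop {N : ℕ} (p : ℝ) (ξ : EuclideanSpace ℝ (Fin N))
    (X : Matrix (Fin N) (Fin N) ℝ) : ℝ :=
  (1/p) * (Matrix.trace X + (p - 2) * qform X ξ / ‖ξ‖^2)

/-- Lower semicontinuous relaxation F_*. -/
noncomputable def Flower {N : ℕ} (p : ℝ) (ξ : EuclideanSpace ℝ (Fin N))
    (X : Matrix (Fin N) (Fin N) ℝ) : ℝ :=
  if ξ = 0 then
    (1/p) * (Matrix.trace X + max (p - 2) 0 * lamMin X + min (p - 2) 0 * lamMax X)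
  else Fop p ξ X

/-- Upper semicontinuous relaxation F^*. -/
noncomputable def Fupper {N : ℕ} (p : ℝ) (ξ : EuclideanSpace ℝ (Fin N))
    (X : Matrix (Fin N) (Fin N) ℝ) : ℝ :=
  if ξ = 0 then
    (1/p) * (Matrix.trace X + min (p - 2) 0 * lamMin X + max (p - 2) 0 * lamMax X)
  else Fop p ξ X

/-- Viscosity solution of `u_t = Δ_p^G u` in `Ω × (0,∞)`. -/
def IsViscositySol {N : ℕ} (p : ℝ) (Ω : Set (EuclideanSpace ℝ (Fin N)))
    (u : EuclideanSpace ℝ (Fin N) → ℝ → ℝ) : Prop :=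
  ContinuousOn (fun q : EuclideanSpace ℝ (Fin N) × ℝ => u q.1 q.2) (Ω ×ˢ Set.Ioi 0) ∧
  (∀ φ : EuclideanSpace ℝ (Fin N) × ℝ → ℝ, ContDiff ℝ 2 φ →
    ∀ x ∈ Ω, ∀ t ∈ Set.Ioi (0:ℝ),
      IsLocalMaxOn (fun q : EuclideanSpace ℝ (Fin N) × ℝ => u q.1 q.2 - φ q)
        (Ω ×ˢ Set.Ioi 0) (x, t) →
      deriv (fun s => φ (x, s)) t ≤
        Fupper p (gradient (fun y => φ (y, t)) x) (hess (fun y => φ (y, t)) x)) ∧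
  (∀ φ : EuclideanSpace ℝ (Fin N) × ℝ → ℝ, ContDiff ℝ 2 φ →
    ∀ x ∈ Ω, ∀ t ∈ Set.Ioi (0:ℝ),
      IsLocalMinOn (fun q : EuclideanSpace ℝ (Fin N) × ℝ => u q.1 q.2 - φ q)
        (Ω ×ˢ Set.Ioi 0) (x, t) →
      Flower p (gradient (fun y => φ (y, t)) x) (hess (fun y => φ (y, t)) x) ≤
        deriv (fun s => φ (x, s)) t)

/-- Bounded (viscosity) solution of problem (P): `u_t = Δ_p^G u` in `Ω × (0,∞)`,
`u = 0` on `Ω × {0}`, `u = 1` on `Γ × (0,∞)`; continuous away from `Γ × {0}`. -/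
def IsSolP {N : ℕ} (p : ℝ) (Ω : Set (EuclideanSpace ℝ (Fin N)))
    (u : EuclideanSpace ℝ (Fin N) → ℝ → ℝ) : Prop :=
  (∃ M : ℝ, ∀ x ∈ closure Ω, ∀ t : ℝ, 0 ≤ t → |u x t| ≤ M) ∧
  (∀ x ∈ closure Ω, ∀ t : ℝ, 0 ≤ t → ¬(x ∈ frontier Ω ∧ t = 0) →
    ContinuousWithinAt (fun q : EuclideanSpace ℝ (Fin N) × ℝ => u q.1 q.2)
      (closure Ω ×ˢ Set.Ici 0) (x, t)) ∧
  IsViscositySol p Ω u ∧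
  (∀ x ∈ Ω, u x 0 = 0) ∧
  (∀ y ∈ frontier Ω, ∀ t : ℝ, 0 < t → u y t = 1)

/-- Viscosity solution of the elliptic equation `u − ε² Δ_p^G u = 0` in `Ω`. -/
def IsEllipticViscositySol {N : ℕ} (p ε : ℝ) (Ω : Set (EuclideanSpace ℝ (Fin N)))
    (u : EuclideanSpace ℝ (Fin N) → ℝ) : Prop :=
  ContinuousOn u Ω ∧
  (∀ φ : EuclideanSpace ℝ (Fin N) → ℝ, ContDiff ℝ 2 φ → ∀ x ∈ Ω,
      IsLocalMaxOn (fun y => u y - φ y) Ω x →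
      φ x - ε^2 * Fupper p (gradient φ x) (hess φ x) ≤ 0) ∧
  (∀ φ : EuclideanSpace ℝ (Fin N) → ℝ, ContDiff ℝ 2 φ → ∀ x ∈ Ω,
      IsLocalMinOn (fun y => u y - φ y) Ω x →
      0 ≤ φ x - ε^2 * Flower p (gradient φ x) (hess φ x))

/-- The complementary error function. -/
noncomputable def Erfc (σ : ℝ) : ℝ := (2 / Real.sqrt π) * ∫ τ in Set.Ioi σ, Real.exp (-τ^2)

/-- The explicit radially symmetric solution `u^ε` of the elliptic problem in the ball `B_R`. -/
noncomputable def uEps (N : ℕ) (p R ε : ℝ) (x : EuclideanSpace ℝ (Fin N)) : ℝ :=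
  (∫ θ in (0:ℝ)..π,
      Real.exp (Real.sqrt (p/(p-1)) * (‖x‖/ε) * Real.cos θ) * (Real.sin θ) ^ (((N:ℝ) - p)/(p-1))) /
  (∫ θ in (0:ℝ)..π,
      Real.exp (Real.sqrt (p/(p-1)) * (R/ε) * Real.cos θ) * (Real.sin θ) ^ (((N:ℝ) - p)/(p-1)))

lemma sin_rpow_int_half {α : ℝ} (hα : -1 < α) :
    IntervalIntegrable (fun θ => Real.sin θ ^ α) volume 0 (π/2) := by
  rcases le_or_gt 0 α with h0 | h0
  · exact ((Real.continuous_rpow_const h0).comp Real.continuous_sin).intervalIntegrable _ _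
  · have hg : IntervalIntegrable (fun θ => (2/π)^α * θ ^ α) volume 0 (π/2) :=
      (intervalIntegral.intervalIntegrable_rpow' hα).const_mul _
    refine hg.mono_fun' ?_ ?_
    · have huI : Set.uIoc (0:ℝ) (π/2) = Ioc 0 (π/2) := uIoc_of_le (by positivity)
      rw [huI]
      refine ContinuousOn.aestronglyMeasurable ?_ measurableSet_Ioc
      refine ContinuousOn.rpow_const (Real.continuous_sin.continuousOn) fun x hx => Or.inl ?_
      exact ne_of_gt (Real.sin_pos_of_pos_of_lt_pi hx.1 (by linarith [Real.pi_pos, hx.2]))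
    · rw [Filter.EventuallyLE, uIoc_of_le (by positivity), ae_restrict_iff' measurableSet_Ioc]
      filter_upwards with θ hθ
      have hθ0 : 0 < θ := hθ.1
      have hsin : 2/π * θ ≤ Real.sin θ := Real.mul_le_sin hθ0.le hθ.2
      have h2 : 0 < 2/π * θ := by positivity
      have hle : Real.sin θ ^ α ≤ (2/π * θ) ^ α :=
        Real.rpow_le_rpow_of_nonpos h2 hsin h0.le
      rw [Real.norm_eq_abs, abs_of_nonneg (Real.rpow_nonneg
        (Real.sin_nonneg_of_nonneg_of_le_pi hθ0.le (by linarith [Real.pi_pos, hθ.2])) α)]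
      calc Real.sin θ ^ α ≤ (2/π * θ) ^ α := hle
        _ = (2/π)^α * θ ^ α := Real.mul_rpow (by positivity) hθ0.le

lemma sin_rpow_int {α : ℝ} (hα : -1 < α) :
    IntervalIntegrable (fun θ => Real.sin θ ^ α) volume 0 π := by
  have h1 := sin_rpow_int_half hα
  have h2 : IntervalIntegrable (fun θ => Real.sin (π - θ) ^ α) volume (π - 0) (π - π/2) :=
    ((sin_rpow_int_half hα).comp_sub_left π)
  simp only [Real.sin_pi_sub, sub_zero] at h2
  have hh : (π - π/2) = π/2 := by ring
  rw [hh] at h2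
  exact h1.trans h2.symm

lemma sin_rpow_int' {α : ℝ} (hα : -1 < α) {δ : ℝ} (hδ : 0 ≤ δ) (hδπ : δ ≤ π) :
    IntervalIntegrable (fun θ => Real.sin θ ^ α) volume 0 δ := by
  refine (sin_rpow_int hα).mono_set ?_
  rw [uIcc_of_le hδ, uIcc_of_le Real.pi_pos.le]
  exact Icc_subset_Icc le_rfl hδπ

lemma sin_rpow_nonneg {α : ℝ} (θ : ℝ) (hθ : θ ∈ Icc (0:ℝ) π) : 0 ≤ Real.sin θ ^ α :=
  Real.rpow_nonneg (Real.sin_nonneg_of_nonneg_of_le_pi hθ.1 hθ.2) α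

lemma f_int {α : ℝ} (hα : -1 < α) (s : ℝ) :
    IntervalIntegrable (fun θ => Real.exp (s * Real.cos θ) * Real.sin θ ^ α) volume 0 π := by
  have hg : IntervalIntegrable (fun θ => Real.exp |s| * Real.sin θ ^ α) volume 0 π :=
    (sin_rpow_int hα).const_mul _
  refine hg.mono_fun' ?_ ?_
  · have huI : Set.uIoc (0:ℝ) π = Ioc 0 π := uIoc_of_le Real.pi_pos.le
    rw [huI, ← Measure.restrict_congr_set Ioo_ae_eq_Ioc]
    refine ContinuousOn.aestronglyMeasurable ?_ measurableSet_Ioo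
    refine ContinuousOn.mul ((Real.continuous_exp.comp (continuous_const.mul Real.continuous_cos)).continuousOn) ?_
    refine ContinuousOn.rpow_const (Real.continuous_sin.continuousOn) fun x hx => Or.inl ?_
    exact ne_of_gt (Real.sin_pos_of_pos_of_lt_pi hx.1 hx.2)
  · rw [Filter.EventuallyLE, uIoc_of_le Real.pi_pos.le, ae_restrict_iff' measurableSet_Ioc]
    filter_upwards with θ hθ
    have h1 : 0 ≤ Real.sin θ ^ α := sin_rpow_nonneg (α := α) θ ⟨hθ.1.le, hθ.2⟩
    have h2 : s * Real.cos θ ≤ |s| := by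
      calc s * Real.cos θ ≤ |s * Real.cos θ| := le_abs_self _
        _ = |s| * |Real.cos θ| := abs_mul _ _
        _ ≤ |s| * 1 := mul_le_mul_of_nonneg_left (Real.abs_cos_le_one θ) (abs_nonneg s)
        _ = |s| := mul_one _
    rw [Real.norm_eq_abs, abs_of_nonneg (mul_nonneg (Real.exp_nonneg _) h1)]
    exact mul_le_mul_of_nonneg_right (Real.exp_le_exp.2 h2) h1

lemma f_int' {α : ℝ} (hα : -1 < α) (s : ℝ) {a b : ℝ} (ha : 0 ≤ a) (hab : a ≤ b) (hb : b ≤ π) :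
    IntervalIntegrable (fun θ => Real.exp (s * Real.cos θ) * Real.sin θ ^ α) volume a b := by
  refine (f_int hα s).mono_set ?_
  rw [uIcc_of_le hab, uIcc_of_le Real.pi_pos.le]
  exact Icc_subset_Icc ha hb

lemma I_pos {α : ℝ} (hα : -1 < α) (s : ℝ) :
    0 < ∫ θ in (0:ℝ)..π, Real.exp (s * Real.cos θ) * Real.sin θ ^ α :=
  intervalIntegral.intervalIntegral_pos_of_pos_on (f_int hα s)
    (fun _ hx => mul_pos (Real.exp_pos _)
      (Real.rpow_pos_of_pos (Real.sin_pos_of_pos_of_lt_pi hx.1 hx.2) _)) Real.pi_pos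

lemma c_pos {α : ℝ} (hα : -1 < α) {δ : ℝ} (hδ : 0 < δ) (hδπ : δ ≤ π) :
    0 < ∫ θ in (0:ℝ)..δ, Real.sin θ ^ α :=
  intervalIntegral.intervalIntegral_pos_of_pos_on (sin_rpow_int' hα hδ.le hδπ)
    (fun x hx => Real.rpow_pos_of_pos
      (Real.sin_pos_of_pos_of_lt_pi hx.1 (lt_of_lt_of_le hx.2 hδπ)) _) hδ

lemma c_le_C {α : ℝ} (hα : -1 < α) {δ : ℝ} (hδ : 0 < δ) (hδπ : δ ≤ π) :
    (∫ θ in (0:ℝ)..δ, Real.sin θ ^ α) ≤ ∫ θ in (0:ℝ)..π, Real.sin θ ^ α := by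
  have h1 := sin_rpow_int' hα hδ.le hδπ
  have h2 : IntervalIntegrable (fun θ => Real.sin θ ^ α) volume δ π := by
    refine (sin_rpow_int hα).mono_set ?_
    rw [uIcc_of_le hδπ, uIcc_of_le Real.pi_pos.le]
    exact Icc_subset_Icc hδ.le le_rfl
  rw [← intervalIntegral.integral_add_adjacent_intervals h1 h2]
  have : 0 ≤ ∫ θ in δ..π, Real.sin θ ^ α :=
    intervalIntegral.integral_nonneg hδπ fun θ hθ => sin_rpow_nonneg θ ⟨hδ.le.trans hθ.1, hθ.2⟩
  linarith

lemma I_le {α : ℝ} (hα : -1 < α) (s : ℝ) (hs : 0 ≤ s) :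
    (∫ θ in (0:ℝ)..π, Real.exp (s * Real.cos θ) * Real.sin θ ^ α) ≤
      Real.exp s * ∫ θ in (0:ℝ)..π, Real.sin θ ^ α := by
  rw [← intervalIntegral.integral_const_mul]
  refine intervalIntegral.integral_mono_on Real.pi_pos.le (f_int hα s)
    ((sin_rpow_int hα).const_mul _) fun θ hθ => ?_
  have h1 : 0 ≤ Real.sin θ ^ α := sin_rpow_nonneg θ hθ
  have h2 : s * Real.cos θ ≤ s := mul_le_of_le_one_right hs (Real.cos_le_one θ)
  exact mul_le_mul_of_nonneg_right (Real.exp_le_exp.2 h2) h1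

lemma I_ge {α : ℝ} (hα : -1 < α) (s : ℝ) (hs : 0 ≤ s) {δ : ℝ} (hδ : 0 < δ) (hδπ : δ ≤ π) :
    Real.exp (s * (1 - δ^2/2)) * (∫ θ in (0:ℝ)..δ, Real.sin θ ^ α) ≤
      ∫ θ in (0:ℝ)..π, Real.exp (s * Real.cos θ) * Real.sin θ ^ α := by
  have hint1 := f_int' hα s le_rfl hδ.le hδπ
  have hint2 := f_int' hα s hδ.le hδπ le_rfl
  rw [← intervalIntegral.integral_add_adjacent_intervals hint1 hint2]
  have h2 : 0 ≤ ∫ θ in δ..π, Real.exp (s * Real.cos θ) * Real.sin θ ^ α :=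
    intervalIntegral.integral_nonneg hδπ fun θ hθ =>
      mul_nonneg (Real.exp_nonneg _) (sin_rpow_nonneg θ ⟨hδ.le.trans hθ.1, hθ.2⟩)
  have h1 : Real.exp (s * (1 - δ^2/2)) * (∫ θ in (0:ℝ)..δ, Real.sin θ ^ α) ≤
      ∫ θ in (0:ℝ)..δ, Real.exp (s * Real.cos θ) * Real.sin θ ^ α := by
    rw [← intervalIntegral.integral_const_mul]
    refine intervalIntegral.integral_mono_on hδ.le
      ((sin_rpow_int' hα hδ.le hδπ).const_mul _) hint1 fun θ hθ => ?_
    have hsn : 0 ≤ Real.sin θ ^ α := sin_rpow_nonneg θ ⟨hθ.1, hθ.2.trans hδπ⟩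
    have hcos : 1 - δ^2/2 ≤ Real.cos θ := by
      have := Real.one_sub_sq_div_two_le_cos (x := θ)
      nlinarith [hθ.1, hθ.2]
    have hmul : s * (1 - δ^2/2) ≤ s * Real.cos θ := mul_le_mul_of_nonneg_left hcos hs
    exact mul_le_mul_of_nonneg_right (Real.exp_le_exp.2 hmul) hsn
  linarith

set_option maxHeartbeats 1000000 in
/-- elliptic asymptotics  `ε log u^ε(x) → −√p' (R − |x|)`,
uniformly on the closed ball `B̄_R`. -/
theorem stmt1 (N : ℕ) (hN : 2 ≤ N) (p R : ℝ) (hp : 1 < p) (hR : 0 < R) :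
    TendstoUniformlyOn (fun (ε : ℝ) (x : EuclideanSpace ℝ (Fin N)) => ε * Real.log (uEps N p R ε x))
      (fun x => -Real.sqrt (p/(p-1)) * (R - ‖x‖)) (𝓝[>] (0:ℝ))
      (Metric.closedBall (0 : EuclideanSpace ℝ (Fin N)) R) := by
  have hp1 : (0:ℝ) < p - 1 := by linarith
  set q := Real.sqrt (p/(p-1)) with hqdef
  have hq0 : 0 < q := Real.sqrt_pos.2 (by positivity)
  set α := ((N:ℝ) - p)/(p-1) with hαdef
  have hN2 : (2:ℝ) ≤ (N:ℝ) := by exact_mod_cast hN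
  have hα : -1 < α := by
    rw [hαdef, lt_div_iff₀ hp1]; nlinarith
  rw [Metric.tendstoUniformlyOn_iff]
  intro η hη
  set C := ∫ θ in (0:ℝ)..π, Real.sin θ ^ α with hCdef
  set δ := min 1 (Real.sqrt (η / (q*R+1))) with hδdef
  have hδ0 : 0 < δ := lt_min one_pos (Real.sqrt_pos.2 (by positivity))
  have hδπ : δ ≤ π := le_trans (min_le_left _ _) (by linarith [Real.pi_gt_three])
  set c := ∫ θ in (0:ℝ)..δ, Real.sin θ ^ α with hcdef
  have hc : 0 < c := c_pos hα hδ0 hδπ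
  have hcC : c ≤ C := c_le_C hα hδ0 hδπ
  have hC : 0 < C := lt_of_lt_of_le hc hcC
  set K := Real.log C - Real.log c with hKdef
  have hK : 0 ≤ K := sub_nonneg.2 (Real.log_le_log hc hcC)
  have hδη : q * R * δ^2 / 2 < η / 2 := by
    have hδ2 : δ^2 * (q*R+1) ≤ η := by
      have h1 : δ ≤ Real.sqrt (η / (q*R+1)) := min_le_right _ _
      have h2 : δ^2 ≤ η / (q*R+1) := by
        rw [← Real.sq_sqrt (le_of_lt (show (0:ℝ) < η/(q*R+1) by positivity))]
        exact pow_le_pow_left₀ hδ0.le h1 2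
      exact (le_div_iff₀ (by positivity)).1 h2
    nlinarith [sq_nonneg δ, hδ0, hq0, hR]
  filter_upwards [Ioo_mem_nhdsGT_of_mem
    (Set.left_mem_Ico.2 (show (0:ℝ) < η/(2*(K+1)) by positivity))] with ε hε x hx
  have hε0 : 0 < ε := hε.1
  have hεK : ε * K < η / 2 := by
    have h2 := hε.2
    rw [lt_div_iff₀ (by positivity)] at h2
    nlinarith
  have hr0 : 0 ≤ ‖x‖ := norm_nonneg x
  have hrR : ‖x‖ ≤ R := by
    have := mem_closedBall.1 hx
    rwa [dist_zero_right] at this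
  have hu : uEps N p R ε x =
      (∫ θ in (0:ℝ)..π, Real.exp (q * (‖x‖/ε) * Real.cos θ) * Real.sin θ ^ α) /
      (∫ θ in (0:ℝ)..π, Real.exp (q * (R/ε) * Real.cos θ) * Real.sin θ ^ α) := rfl
  have hIr := I_pos hα (q * (‖x‖/ε))
  have hIR := I_pos hα (q * (R/ε))
  have hub : ∀ s : ℝ, 0 ≤ s →
      Real.log (∫ θ in (0:ℝ)..π, Real.exp (s * Real.cos θ) * Real.sin θ ^ α) ≤ s + Real.log C := by
    intro s hs
    have := Real.log_le_log (I_pos hα s) (I_le hα s hs)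
    rwa [Real.log_mul (Real.exp_ne_zero _) hC.ne', Real.log_exp] at this
  have hlb : ∀ s : ℝ, 0 ≤ s →
      s * (1 - δ^2/2) + Real.log c ≤
        Real.log (∫ θ in (0:ℝ)..π, Real.exp (s * Real.cos θ) * Real.sin θ ^ α) := by
    intro s hs
    have := Real.log_le_log (by positivity) (I_ge hα s hs hδ0 hδπ)
    rwa [Real.log_mul (Real.exp_ne_zero _) hc.ne', Real.log_exp] at this
  have hsr : 0 ≤ q * (‖x‖/ε) := by positivity
  have hsR : 0 ≤ q * (R/ε) := by positivity
  have a1 := hub _ hsr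
  have a2 := hlb _ hsr
  have b1 := hub _ hsR
  have b2 := hlb _ hsR
  have eεr : ε * (q * (‖x‖/ε)) = q * ‖x‖ := by field_simp
  have eεR : ε * (q * (R/ε)) = q * R := by field_simp
  have A1 : ε * Real.log (∫ θ in (0:ℝ)..π, Real.exp (q * (‖x‖/ε) * Real.cos θ) * Real.sin θ ^ α)
      ≤ q * ‖x‖ + ε * Real.log C := by
    have h := mul_le_mul_of_nonneg_left a1 hε0.le
    rw [mul_add, eεr] at h
    exact h
  have B1 : ε * Real.log (∫ θ in (0:ℝ)..π, Real.exp (q * (R/ε) * Real.cos θ) * Real.sin θ ^ α)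
      ≤ q * R + ε * Real.log C := by
    have h := mul_le_mul_of_nonneg_left b1 hε0.le
    rw [mul_add, eεR] at h
    exact h
  have A2 : q * ‖x‖ * (1 - δ^2/2) + ε * Real.log c ≤
      ε * Real.log (∫ θ in (0:ℝ)..π, Real.exp (q * (‖x‖/ε) * Real.cos θ) * Real.sin θ ^ α) := by
    have h := mul_le_mul_of_nonneg_left a2 hε0.le
    rw [mul_add, show ε * (q * (‖x‖/ε) * (1 - δ^2/2)) = ε * (q * (‖x‖/ε)) * (1 - δ^2/2) from by
      ring, eεr] at h
    exact h
  have B2 : q * R * (1 - δ^2/2) + ε * Real.log c ≤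
      ε * Real.log (∫ θ in (0:ℝ)..π, Real.exp (q * (R/ε) * Real.cos θ) * Real.sin θ ^ α) := by
    have h := mul_le_mul_of_nonneg_left b2 hε0.le
    rw [mul_add, show ε * (q * (R/ε) * (1 - δ^2/2)) = ε * (q * (R/ε)) * (1 - δ^2/2) from by
      ring, eεR] at h
    exact h
  have hrδ : q * ‖x‖ * δ^2 ≤ q * R * δ^2 :=
    mul_le_mul_of_nonneg_right (mul_le_mul_of_nonneg_left hrR hq0.le) (sq_nonneg δ)
  have hKe : ε * K = ε * Real.log C - ε * Real.log c := by rw [hKdef]; ring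
  clear_value q α C δ c K
  clear hub hlb a1 a2 b1 b2 eεr eεR hδ0 hδπ hc hcC hC hK hδdef hcdef hCdef hKdef hαdef hqdef
    hα hN2 hsr hsR hε
  rw [Real.dist_eq, hu, Real.log_div hIr.ne' hIR.ne', abs_lt]
  have hsplit : ∀ u v : ℝ, ε * (u - v) = ε * u - ε * v := fun u v => by ring
  rw [hsplit]
  constructor
  · linarith
  · linarith

end
end

section
/- Let N ≥ 2, 1 < p < ∞, p' = p/(p−1), and let H = {x ∈ ℝ^N : x₁ > 0}. Define Ψ(x,t) = Erfc(√p'·x₁/(2√t)) for x ∈ H̄ and t > 0. Then: (i) Ψ is smooth on H×(0,∞), its spatial gradient never vanishes there, and ∂_t Ψ(x,t) = (1/p)[ΔΨ(x,t) + (p−2)⟨∇²Ψ(x,t)∇Ψ(x,t), ∇Ψ(x,t)⟩/|∇Ψ(x,t)|²] = (1/p')·∂²Ψ/∂x₁²(x,t) at every (x,t) ∈ H×(0,∞); (ii) Ψ(x,t) → 0 as t → 0⁺ for every x with x₁ > 0, and Ψ(x,t) = 1 whenever x₁ = 0; (iii) for every δ > 0, 4t·log Ψ(x,t) → −p'·x₁²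 as t → 0⁺, uniformly on the strip {x ∈ ℝ^N : 0 ≤ x₁ ≤ δ}. -/
open MeasureTheory Metric Set Filter
open scoped Topology ENNReal NNReal Real Classical

noncomputable section

lemma gauss_integrable : Integrable (fun τ : ℝ => Real.exp (-τ^2)) := by
  simpa using integrable_exp_neg_mul_sq one_pos

lemma gauss_Ioi_zero : ∫ τ in Set.Ioi (0:ℝ), Real.exp (-τ^2) = Real.sqrt π / 2 := by
  simpa using integral_gaussian_Ioi 1

lemma sqrt_pi_pos : 0 < Real.sqrt π := Real.sqrt_pos.2 Real.pi_pos

lemma Erfc_zero : Erfc 0 = 1 := by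
  rw [Erfc, gauss_Ioi_zero]
  have h : Real.sqrt π ≠ 0 := ne_of_gt sqrt_pi_pos
  field_simp

lemma integral_Ioi_eq (σ : ℝ) :
    ∫ τ in Set.Ioi σ, Real.exp (-τ^2) =
      (∫ τ : ℝ, Real.exp (-τ^2)) - ∫ τ in Set.Iic σ, Real.exp (-τ^2) := by
  have := MeasureTheory.integral_add_compl (μ := volume) (s := Set.Iic σ)
    measurableSet_Iic gauss_integrable
  rw [compl_Iic] at this
  linarith [this]

lemma integral_Iic_eq (σ : ℝ) :
    ∫ τ in Set.Iic σ, Real.exp (-τ^2) =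
      (∫ τ in Set.Iic (0:ℝ), Real.exp (-τ^2)) + ∫ τ in (0:ℝ)..σ, Real.exp (-τ^2) := by
  have := intervalIntegral.integral_Iic_sub_Iic (μ := volume)
    (f := fun τ : ℝ => Real.exp (-τ^2)) gauss_integrable.integrableOn gauss_integrable.integrableOn
    (a := 0) (b := σ)
  linarith [this]

lemma Erfc_eq_one_sub (σ : ℝ) :
    Erfc σ = 1 - (2 / Real.sqrt π) * ∫ τ in (0:ℝ)..σ, Real.exp (-τ^2) := by
  have h0 : (1:ℝ) = (2 / Real.sqrt π) * ((∫ τ : ℝ, Real.exp (-τ^2))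
      - ∫ τ in Set.Iic (0:ℝ), Real.exp (-τ^2)) := by
    rw [← integral_Ioi_eq 0, gauss_Ioi_zero]
    have h : Real.sqrt π ≠ 0 := ne_of_gt sqrt_pi_pos
    field_simp
  rw [Erfc, integral_Ioi_eq, integral_Iic_eq]
  rw [h0]; ring

lemma hasDerivAt_Erfc (σ : ℝ) :
    HasDerivAt Erfc (-(2 / Real.sqrt π) * Real.exp (-σ^2)) σ := by
  have h1 : HasDerivAt (fun s : ℝ => ∫ τ in (0:ℝ)..s, Real.exp (-τ^2)) (Real.exp (-σ^2)) σ :=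
    intervalIntegral.integral_hasDerivAt_right gauss_integrable.intervalIntegrable
      (gauss_integrable.1.stronglyMeasurableAtFilter)
      ((by continuity : Continuous fun τ : ℝ => Real.exp (-τ^2)).continuousAt)
  have h2 : HasDerivAt (fun s : ℝ => 1 - (2 / Real.sqrt π) * ∫ τ in (0:ℝ)..s, Real.exp (-τ^2))
      (-(2 / Real.sqrt π) * Real.exp (-σ^2)) σ := by
    simpa using ((h1.const_mul (2 / Real.sqrt π)).const_sub 1)
  have : Erfc = fun s : ℝ => 1 - (2 / Real.sqrt π) * ∫ τ in (0:ℝ)..s, Real.exp (-τ^2) :=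
    funext Erfc_eq_one_sub
  rw [this]; exact h2

lemma deriv_Erfc : deriv Erfc = fun σ => -(2 / Real.sqrt π) * Real.exp (-σ^2) :=
  funext fun σ => (hasDerivAt_Erfc σ).deriv

lemma contDiff_gausskernel : ContDiff ℝ (⊤:ℕ∞) (fun σ : ℝ => -(2 / Real.sqrt π) * Real.exp (-σ^2)) :=
  contDiff_const.mul (Real.contDiff_exp.comp ((contDiff_id.pow 2).neg))

lemma contDiff_Erfc : ContDiff ℝ (⊤:ℕ∞) Erfc := by
  rw [contDiff_infty_iff_deriv]
  refine ⟨fun σ => (hasDerivAt_Erfc σ).differentiableAt, ?_⟩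
  rw [deriv_Erfc]; exact contDiff_gausskernel

lemma hasDerivAt_deriv_Erfc (σ : ℝ) :
    HasDerivAt (fun s => -(2 / Real.sqrt π) * Real.exp (-s^2))
      (2 * σ * (2 / Real.sqrt π) * Real.exp (-σ^2)) σ := by
  have h : HasDerivAt (fun s : ℝ => -s^2) (-(2*σ)) σ := by
    simpa using ((hasDerivAt_pow 2 σ).fun_neg)
  have := (h.exp).const_mul (-(2 / Real.sqrt π))
  exact this.congr_deriv (by ring)

lemma Erfc_tendsto_zero : Tendsto Erfc atTop (𝓝 0) := by
  have h1 : Tendsto (fun σ => ∫ τ in (0:ℝ)..σ, Real.exp (-τ^2)) atTop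
      (𝓝 (∫ τ in Set.Ioi (0:ℝ), Real.exp (-τ^2))) :=
    intervalIntegral_tendsto_integral_Ioi 0 gauss_integrable.integrableOn tendsto_id
  have h2 : Tendsto (fun σ => 1 - (2 / Real.sqrt π) * ∫ τ in (0:ℝ)..σ, Real.exp (-τ^2)) atTop
      (𝓝 (1 - (2 / Real.sqrt π) * (Real.sqrt π / 2))) := by
    rw [← gauss_Ioi_zero] at *
    exact (tendsto_const_nhds.sub ((h1.const_mul _)))
  have h3 : (1 - (2 / Real.sqrt π) * (Real.sqrt π / 2)) = 0 := by
    have h : Real.sqrt π ≠ 0 := ne_of_gt sqrt_pi_pos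
    field_simp; ring
  rw [h3] at h2
  have : Erfc = fun s : ℝ => 1 - (2 / Real.sqrt π) * ∫ τ in (0:ℝ)..s, Real.exp (-τ^2) :=
    funext Erfc_eq_one_sub
  rw [this]; exact h2

lemma Erfc_le {σ : ℝ} (hσ : 0 ≤ σ) : Erfc σ ≤ Real.exp (-σ^2) := by
  have key : ∫ τ in Set.Ioi σ, Real.exp (-τ^2)
      ≤ Real.exp (-σ^2) * (Real.sqrt π / 2) := by
    have him : ∫ τ in Set.Ioi σ, Real.exp (-τ^2)
        = ∫ u in Set.Ioi (0:ℝ), Real.exp (-(u + σ)^2) := by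
      have h := (measurePreserving_add_right (volume : Measure ℝ) σ).setIntegral_image_emb
        (MeasurableEquiv.addRight σ).measurableEmbedding
        (fun τ => Real.exp (-τ^2)) (Set.Ioi (0:ℝ))
      rw [show ((fun x => x + σ) '' Set.Ioi (0:ℝ)) = Set.Ioi σ from by
        rw [Set.image_add_const_Ioi]; simp] at h
      simpa using h
    rw [him]
    have hle : ∀ u ∈ Set.Ioi (0:ℝ), Real.exp (-(u + σ)^2)
        ≤ Real.exp (-σ^2) * Real.exp (-u^2) := by
      intro u hu
      rw [← Real.exp_add, Real.exp_le_exp]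
      nlinarith [mul_nonneg (le_of_lt hu) hσ]
    calc ∫ u in Set.Ioi (0:ℝ), Real.exp (-(u + σ)^2)
        ≤ ∫ u in Set.Ioi (0:ℝ), Real.exp (-σ^2) * Real.exp (-u^2) := by
          refine setIntegral_mono_on ?_ ?_ measurableSet_Ioi hle
          · have : Integrable (fun u : ℝ => Real.exp (-(u + σ)^2)) := by
              simpa using gauss_integrable.comp_add_right σ
            exact this.integrableOn
          · exact (gauss_integrable.const_mul _).integrableOn
      _ = Real.exp (-σ^2) * (Real.sqrt π / 2) := by
          rw [MeasureTheory.integral_const_mul, gauss_Ioi_zero]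
  rw [Erfc]
  calc (2 / Real.sqrt π) * ∫ τ in Set.Ioi σ, Real.exp (-τ^2)
      ≤ (2 / Real.sqrt π) * (Real.exp (-σ^2) * (Real.sqrt π / 2)) := by
        apply mul_le_mul_of_nonneg_left key (by positivity)
    _ = Real.exp (-σ^2) := by
        have h : Real.sqrt π ≠ 0 := ne_of_gt sqrt_pi_pos
        field_simp

lemma Erfc_ge {σ : ℝ} (hσ : 0 ≤ σ) :
    (2 / Real.sqrt π) * Real.exp (-(σ+1)^2) ≤ Erfc σ := by
  have key : Real.exp (-(σ+1)^2) ≤ ∫ τ in Set.Ioi σ, Real.exp (-τ^2) := by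
    have h1 : Real.exp (-(σ+1)^2) ≤ ∫ τ in Set.Ioc σ (σ+1), Real.exp (-τ^2) := by
      have := MeasureTheory.setIntegral_ge_of_const_le (μ := volume)
        (f := fun τ : ℝ => Real.exp (-τ^2)) (c := Real.exp (-(σ+1)^2))
        (s := Set.Ioc σ (σ+1)) measurableSet_Ioc ?_ ?_ ?_
      · simpa [Real.volume_Ioc] using this
      · simp [Real.volume_Ioc]
      · intro τ hτ
        rw [Real.exp_le_exp]
        have h1 := hτ.1; have h2 := hτ.2
        nlinarith
      · exact gauss_integrable.integrableOn
    refine le_trans h1 (setIntegral_mono_set gauss_integrable.integrableOn ?_ ?_)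
    · exact Filter.Eventually.of_forall fun τ => le_of_lt (Real.exp_pos _)
    · exact HasSubset.Subset.eventuallyLE Set.Ioc_subset_Ioi_self
  rw [Erfc]
  exact mul_le_mul_of_nonneg_left key (by positivity)

lemma Erfc_pos {σ : ℝ} (hσ : 0 ≤ σ) : 0 < Erfc σ :=
  lt_of_lt_of_le (by positivity) (Erfc_ge hσ)

section spatial
variable {N : ℕ}

lemma spatial_hasFDerivAt (i1 : Fin N) (k : ℝ) (x : EuclideanSpace ℝ (Fin N)) :
    HasFDerivAt (fun y : EuclideanSpace ℝ (Fin N) => Erfc (k * y i1))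
      ((-(2 / Real.sqrt π) * Real.exp (-(k * x i1)^2) * k) •
        (EuclideanSpace.proj i1 : EuclideanSpace ℝ (Fin N) →L[ℝ] ℝ)) x := by
  have hL : HasFDerivAt (fun y : EuclideanSpace ℝ (Fin N) => k * y i1)
      (k • (EuclideanSpace.proj i1 : EuclideanSpace ℝ (Fin N) →L[ℝ] ℝ)) x :=
    ((EuclideanSpace.proj i1 : EuclideanSpace ℝ (Fin N) →L[ℝ] ℝ)).hasFDerivAt.const_mul k
  have h := (hasDerivAt_Erfc (k * x i1)).comp_hasFDerivAt x hL
  exact h.congr_fderiv (by ext v; simp [smul_smul])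

lemma spatial_hasGradientAt (i1 : Fin N) (k : ℝ) (x : EuclideanSpace ℝ (Fin N)) :
    HasGradientAt (fun y : EuclideanSpace ℝ (Fin N) => Erfc (k * y i1))
      ((-(2 / Real.sqrt π) * Real.exp (-(k * x i1)^2) * k) •
        EuclideanSpace.single i1 (1:ℝ)) x := by
  rw [hasGradientAt_iff_hasFDerivAt]
  have e1 : (InnerProductSpace.toDual ℝ (EuclideanSpace ℝ (Fin N))
      ((-(2 / Real.sqrt π) * Real.exp (-(k * x i1)^2) * k) • EuclideanSpace.single i1 (1:ℝ)))
      = (-(2 / Real.sqrt π) * Real.exp (-(k * x i1)^2) * k) •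
        (EuclideanSpace.proj i1 : EuclideanSpace ℝ (Fin N) →L[ℝ] ℝ) := by
    ext v
    simp [InnerProductSpace.toDual_apply_apply, real_inner_smul_left, EuclideanSpace.inner_single_left]
  rw [e1]
  exact spatial_hasFDerivAt i1 k x

lemma spatial_hess (i1 : Fin N) (k : ℝ) (x : EuclideanSpace ℝ (Fin N)) (i j : Fin N) :
    hess (fun y : EuclideanSpace ℝ (Fin N) => Erfc (k * y i1)) x i j =
      (2 * (k * x i1) * (2 / Real.sqrt π) * Real.exp (-(k * x i1)^2) * k^2) *
        (if i = i1 then 1 else 0) * (if j = i1 then 1 else 0) := by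
  have hL : ∀ z : EuclideanSpace ℝ (Fin N), HasFDerivAt
      (fun y : EuclideanSpace ℝ (Fin N) => k * y i1)
      (k • (EuclideanSpace.proj i1 : EuclideanSpace ℝ (Fin N) →L[ℝ] ℝ)) z :=
    fun z => ((EuclideanSpace.proj i1 : EuclideanSpace ℝ (Fin N) →L[ℝ] ℝ)).hasFDerivAt.const_mul k
  have hf : (fderiv ℝ (fun y : EuclideanSpace ℝ (Fin N) => Erfc (k * y i1))) =
      fun y => (-(2 / Real.sqrt π) * Real.exp (-(k * y i1)^2) * k) •
        (EuclideanSpace.proj i1 : EuclideanSpace ℝ (Fin N) →L[ℝ] ℝ) :=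
    funext fun y => (spatial_hasFDerivAt i1 k y).fderiv
  have hg : HasFDerivAt (fun y : EuclideanSpace ℝ (Fin N) =>
      -(2 / Real.sqrt π) * Real.exp (-(k * y i1)^2) * k)
      ((2 * (k * x i1) * (2 / Real.sqrt π) * Real.exp (-(k * x i1)^2) * k) •
        (k • (EuclideanSpace.proj i1 : EuclideanSpace ℝ (Fin N) →L[ℝ] ℝ))) x := by
    have h1 := ((hasDerivAt_deriv_Erfc (k * x i1)).comp_hasFDerivAt x (hL x)).mul_const k
    exact h1.congr_fderiv (by
      ext v
      simp only [ContinuousLinearMap.smul_apply, smul_eq_mul, Function.comp]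
      ring)
  have h2 : HasFDerivAt (fun y : EuclideanSpace ℝ (Fin N) =>
      (-(2 / Real.sqrt π) * Real.exp (-(k * y i1)^2) * k) •
        (EuclideanSpace.proj i1 : EuclideanSpace ℝ (Fin N) →L[ℝ] ℝ))
      (ContinuousLinearMap.smulRight
        ((2 * (k * x i1) * (2 / Real.sqrt π) * Real.exp (-(k * x i1)^2) * k) •
          (k • (EuclideanSpace.proj i1 : EuclideanSpace ℝ (Fin N) →L[ℝ] ℝ)))
        (EuclideanSpace.proj i1 : EuclideanSpace ℝ (Fin N) →L[ℝ] ℝ)) x :=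
    by exact hg.smul_const (EuclideanSpace.proj i1 : EuclideanSpace ℝ (Fin N) →L[ℝ] ℝ)
  rw [hess, iteratedFDeriv_two_apply, hf, h2.fderiv]
  simp only [ContinuousLinearMap.smulRight_apply, ContinuousLinearMap.smul_apply,
    Matrix.cons_val_zero, Matrix.cons_val_one, Matrix.head_cons, smul_eq_mul]
  have hs : ∀ m : Fin N, (EuclideanSpace.proj i1 : EuclideanSpace ℝ (Fin N) →L[ℝ] ℝ)
      (EuclideanSpace.single m (1:ℝ)) = if m = i1 then 1 else 0 := by
    intro m
    simp [PiLp.proj_apply, EuclideanSpace.single_apply, eq_comm]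
  rw [hs i, hs j]
  ring

end spatial

section alg
variable {N : ℕ}

lemma trace_diag (i1 : Fin N) (M : ℝ) :
    Matrix.trace (fun i j => M * (if i = i1 then (1:ℝ) else 0) * (if j = i1 then 1 else 0)) = M := by
  unfold Matrix.trace
  have h : ∀ i : Fin N, Matrix.diag
      (fun i j => M * (if i = i1 then (1:ℝ) else 0) * (if j = i1 then 1 else 0)) i
      = if i = i1 then M else 0 := by
    intro i; by_cases h : i = i1 <;> simp [Matrix.diag, h]
  rw [Finset.sum_congr rfl fun i _ => h i]
  simp

lemma single_smul_apply (i1 : Fin N) (C : ℝ) (j : Fin N) :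
    (C • EuclideanSpace.single i1 (1:ℝ)) j = C * (if j = i1 then 1 else 0) := by
  simp [EuclideanSpace.single_apply]

lemma qform_diag (i1 : Fin N) (M C : ℝ) :
    qform (fun i j => M * (if i = i1 then (1:ℝ) else 0) * (if j = i1 then 1 else 0))
      (C • EuclideanSpace.single i1 (1:ℝ)) = M * C^2 := by
  unfold qform
  rw [Finset.sum_eq_single_of_mem i1 (Finset.mem_univ _) ?_]
  · rw [Finset.sum_eq_single_of_mem i1 (Finset.mem_univ _) ?_]
    · simp [single_smul_apply]; ring
    · intro j _ hj; simp [single_smul_apply, hj]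
  · intro i _ hi
    apply Finset.sum_eq_zero; intro j _
    simp [single_smul_apply, hi]

lemma norm_single_smul_sq (i1 : Fin N) (C : ℝ) :
    ‖C • EuclideanSpace.single i1 (1:ℝ)‖^2 = C^2 := by
  rw [norm_smul, EuclideanSpace.norm_single]
  simp [sq_abs, mul_pow]

end alg

/-- the one-dimensional solution `Ψ(x,t) = Erfc(√p'·x₁/(2√t))` in the half-space
`H = {x₁ > 0}`: (i) smoothness, nonvanishing spatial gradient, and the PDE; (ii) initial and
boundary values; (iii) `4t log Ψ(x,t) → −p' x₁²` uniformly on strips `0 ≤ x₁ ≤ δ`. -/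
theorem stmt3 (N : ℕ) (hN : 2 ≤ N) (p p' : ℝ) (hp : 1 < p) (hp' : p' = p/(p-1))
    (i1 : Fin N) (hi1 : (i1 : ℕ) = 0)
    (Ψ : EuclideanSpace ℝ (Fin N) → ℝ → ℝ)
    (hΨ : ∀ x t, Ψ x t = Erfc (Real.sqrt p' * x i1 / (2 * Real.sqrt t))) :
    (ContDiffOn ℝ (⊤ : ℕ∞) (fun q : EuclideanSpace ℝ (Fin N) × ℝ => Ψ q.1 q.2)
        ({x : EuclideanSpace ℝ (Fin N) | 0 < x i1} ×ˢ Set.Ioi 0) ∧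
      (∀ x : EuclideanSpace ℝ (Fin N), 0 < x i1 → ∀ t : ℝ, 0 < t →
        gradient (fun y => Ψ y t) x ≠ 0 ∧
        deriv (fun s => Ψ x s) t =
          Fop p (gradient (fun y => Ψ y t) x) (hess (fun y => Ψ y t) x) ∧
        deriv (fun s => Ψ x s) t = (1/p') * hess (fun y => Ψ y t) x i1 i1)) ∧
    ((∀ x : EuclideanSpace ℝ (Fin N), 0 < x i1 →
        Filter.Tendsto (fun t => Ψ x t) (𝓝[>] (0:ℝ)) (𝓝 0)) ∧
      (∀ x : EuclideanSpace ℝ (Fin N), x i1 = 0 → ∀ t : ℝ, 0 < t → Ψ x t = 1)) ∧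
    (∀ δ : ℝ, 0 < δ →
      TendstoUniformlyOn (fun (t : ℝ) (x : EuclideanSpace ℝ (Fin N)) => 4 * t * Real.log (Ψ x t))
        (fun x => -p' * (x i1)^2) (𝓝[>] (0:ℝ))
        {x : EuclideanSpace ℝ (Fin N) | 0 ≤ x i1 ∧ x i1 ≤ δ}) := by
  have hp0 : (0:ℝ) < p := lt_trans one_pos hp
  have hp1 : (0:ℝ) < p - 1 := by linarith
  have hp'pos : 0 < p' := hp' ▸ div_pos hp0 hp1
  have ha : 0 < Real.sqrt p' := Real.sqrt_pos.2 hp'pos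
  have ha2 : Real.sqrt p' ^ 2 = p' := Real.sq_sqrt hp'pos.le
  refine ⟨⟨?_, ?_⟩, ⟨?_, ?_⟩, ?_⟩
  · -- smoothness
    have hfun : (fun q : EuclideanSpace ℝ (Fin N) × ℝ => Ψ q.1 q.2) =
        fun q => Erfc (Real.sqrt p' * q.1 i1 / (2 * Real.sqrt q.2)) :=
      funext fun q => hΨ q.1 q.2
    rw [hfun]
    intro q hq
    have ht : (0:ℝ) < q.2 := hq.2
    apply ContDiffAt.contDiffWithinAt
    have hinner : ContDiffAt ℝ (⊤:ℕ∞)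
        (fun q : EuclideanSpace ℝ (Fin N) × ℝ => Real.sqrt p' * q.1 i1 / (2 * Real.sqrt q.2)) q := by
      apply ContDiffAt.div
      · exact (contDiff_const.mul
          ((EuclideanSpace.proj i1 :
            EuclideanSpace ℝ (Fin N) →L[ℝ] ℝ).contDiff.comp contDiff_fst)).contDiffAt
      · exact contDiffAt_const.mul ((Real.contDiffAt_sqrt ht.ne').comp q contDiffAt_snd)
      · positivity
    exact contDiff_Erfc.contDiffAt.comp q hinner
  · -- pointwise identities
    intro x hx t ht
    have hst : 0 < Real.sqrt t := Real.sqrt_pos.2 ht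
    set st := Real.sqrt t with hst_def
    set k : ℝ := Real.sqrt p' / (2 * st) with hk_def
    have hkpos : 0 < k := div_pos ha (by positivity)
    set σ : ℝ := k * x i1 with hσ_def
    set c : ℝ := 2 / Real.sqrt π with hc_def
    have hcpos : 0 < c := by rw [hc_def]; positivity
    set C : ℝ := -c * Real.exp (-σ^2) * k with hC_def
    set M : ℝ := 2 * σ * c * Real.exp (-σ^2) * k^2 with hM_def
    have hCneg : C < 0 := by
      rw [hC_def]
      have h1 : 0 < c * Real.exp (-σ^2) * k := by positivity
      nlinarith
    have hC0 : C ≠ 0 := ne_of_lt hCneg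
    have hfunx : (fun y : EuclideanSpace ℝ (Fin N) => Ψ y t) =
        fun y => Erfc (k * y i1) := by
      funext y
      rw [hΨ]
      congr 1
      rw [hk_def, div_mul_eq_mul_div]
    have hgradval : gradient (fun y => Ψ y t) x = C • EuclideanSpace.single i1 (1:ℝ) := by
      rw [hfunx]
      exact (spatial_hasGradientAt i1 k x).gradient
    have hhess : hess (fun y => Ψ y t) x =
        fun i j => M * (if i = i1 then (1:ℝ) else 0) * (if j = i1 then 1 else 0) := by
      rw [hfunx]
      funext i j
      rw [spatial_hess i1 k x i j]
    -- time derivative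
    have hσ_eq : Real.sqrt p' * x i1 * (2 * st)⁻¹ = σ := by
      rw [hσ_def, hk_def]; ring
    have hin : HasDerivAt (fun s : ℝ => Real.sqrt p' * x i1 * (2 * Real.sqrt s)⁻¹)
        (Real.sqrt p' * x i1 * (-(2 * (1 / (2 * st))) / (2 * st)^2)) t := by
      have h1 : HasDerivAt (fun s : ℝ => 2 * Real.sqrt s) (2 * (1 / (2 * st))) t :=
        (Real.hasDerivAt_sqrt ht.ne').const_mul 2
      exact (h1.inv (by positivity)).const_mul _
    have hψt : HasDerivAt (fun s => Ψ x s)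
        ((-c * Real.exp (-σ^2)) * (Real.sqrt p' * x i1 * (-(2 * (1 / (2 * st))) / (2 * st)^2))) t := by
      have hfunt : (fun s => Ψ x s) =
          fun s => Erfc (Real.sqrt p' * x i1 * (2 * Real.sqrt s)⁻¹) := by
        funext s; rw [hΨ, div_eq_mul_inv]
      rw [hfunt]
      have := (hasDerivAt_Erfc (Real.sqrt p' * x i1 * (2 * st)⁻¹)).comp t hin
      rw [hσ_eq] at this
      simpa [hc_def, Function.comp_def] using this
    have hderiv_eq : deriv (fun s => Ψ x s) t = (1/p') * M := by
      rw [hψt.deriv, hM_def, hσ_def, hk_def]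
      have hst2 : st * st = t := Real.mul_self_sqrt ht.le
      have hp'0 : p' ≠ 0 := ne_of_gt hp'pos
      field_simp
      rw [ha2]
    refine ⟨?_, ?_, ?_⟩
    · rw [hgradval]
      refine smul_ne_zero hC0 ?_
      intro h
      have h1 : (EuclideanSpace.single i1 (1:ℝ)) i1 = 0 := by rw [h]; rfl
      simp [EuclideanSpace.single_apply] at h1
    · rw [hderiv_eq, hgradval, hhess]
      unfold Fop
      rw [trace_diag i1 M, qform_diag i1 M C, norm_single_smul_sq i1 C]
      have hC2 : C^2 ≠ 0 := pow_ne_zero 2 hC0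
      rw [hp']
      field_simp
      ring
    · rw [hderiv_eq, hhess]
      simp
  · -- initial condition
    intro x hx
    have hfunt : (fun s => Ψ x s) =
        fun s => Erfc (Real.sqrt p' * x i1 * (2 * Real.sqrt s)⁻¹) := by
      funext s; rw [hΨ, div_eq_mul_inv]
    rw [hfunt]
    apply Erfc_tendsto_zero.comp
    have h1 : Tendsto (fun s : ℝ => 2 * Real.sqrt s) (𝓝[>] 0) (𝓝[>] 0) := by
      rw [tendsto_nhdsWithin_iff]
      constructor
      · have hc : Continuous fun s : ℝ => 2 * Real.sqrt s := by continuity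
        have := (hc.tendsto 0).mono_left (nhdsWithin_le_nhds (s := Set.Ioi (0:ℝ)))
        simpa using this
      · filter_upwards [self_mem_nhdsWithin] with s hs
        exact mul_pos two_pos (Real.sqrt_pos.2 hs)
    exact (tendsto_inv_nhdsGT_zero.comp h1).const_mul_atTop (mul_pos ha hx)
  · -- boundary condition
    intro x hx0 t ht
    rw [hΨ, hx0]
    simp [Erfc_zero]
  · -- uniform convergence
    intro δ hδ
    rw [Metric.tendstoUniformlyOn_iff]
    intro ε hε
    set c : ℝ := 2 / Real.sqrt π with hc_def
    have hcpos : 0 < c := by rw [hc_def]; positivity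
    set K : ℝ := 1 - Real.log c with hK_def
    have hh : Tendsto (fun t : ℝ => 4*t*K + 4*Real.sqrt p'*δ*Real.sqrt t) (𝓝[>] 0) (𝓝 0) := by
      have hcont : Continuous fun t : ℝ => 4*t*K + 4*Real.sqrt p'*δ*Real.sqrt t := by continuity
      have h0 := (hcont.tendsto 0).mono_left (nhdsWithin_le_nhds (s := Set.Ioi (0:ℝ)))
      simpa using h0
    filter_upwards [hh.eventually_lt_const hε, self_mem_nhdsWithin] with t hlt ht
    intro x hx
    obtain ⟨hx0, hxδ⟩ := hx
    have ht0 : (0:ℝ) < t := ht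
    have hst : 0 < Real.sqrt t := Real.sqrt_pos.2 ht0
    set σ : ℝ := Real.sqrt p' * x i1 / (2 * Real.sqrt t) with hσ_def
    have hσ0 : 0 ≤ σ := by
      rw [hσ_def]
      exact div_nonneg (mul_nonneg ha.le hx0) (by positivity)
    have hts : Real.sqrt t * Real.sqrt t = t := Real.mul_self_sqrt ht0.le
    have hσsq : 4*t*σ^2 = p' * (x i1)^2 := by
      have hden : (2*Real.sqrt t)^2 = 4*t := by
        rw [mul_pow, Real.sq_sqrt ht0.le]; norm_num
      rw [hσ_def, div_pow, mul_pow, ha2, hden]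
      field_simp
    have hEpos : 0 < Erfc σ := Erfc_pos hσ0
    have hub : Real.log (Erfc σ) ≤ -σ^2 := by
      calc Real.log (Erfc σ) ≤ Real.log (Real.exp (-σ^2)) :=
            Real.log_le_log hEpos (Erfc_le hσ0)
        _ = -σ^2 := Real.log_exp _
    have hlb : Real.log c - (σ+1)^2 ≤ Real.log (Erfc σ) := by
      have h1 : Real.log (c * Real.exp (-(σ+1)^2)) ≤ Real.log (Erfc σ) :=
        Real.log_le_log (by positivity) (Erfc_ge hσ0)
      rwa [Real.log_mul (ne_of_gt hcpos) (by positivity), Real.log_exp] at h1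
    have h8 : 2*t*σ = Real.sqrt p'*(x i1)*Real.sqrt t := by
      rw [hσ_def]
      field_simp
      linear_combination (-(x i1)) * Real.sq_sqrt ht0.le
    have hΨx : Ψ x t = Erfc σ := by rw [hΨ, hσ_def]
    rw [Real.dist_eq, hΨx]
    have key : |(-p' * (x i1)^2) - 4*t*Real.log (Erfc σ)| ≤ 4*t*K + 4*Real.sqrt p'*δ*Real.sqrt t := by
      have hL : Real.log (Erfc σ) + σ^2 ≤ 0 := by linarith
      have hexp : (σ+1)^2 = σ^2 + 2*σ + 1 := by ring
      have hL2 : -(Real.log (Erfc σ) + σ^2) ≤ K + 2*σ := by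
        rw [hK_def]; linarith [hlb, hexp.symm ▸ hlb]
      have hdiff : (-p' * (x i1)^2) - 4*t*Real.log (Erfc σ) =
          4*t*(-(Real.log (Erfc σ) + σ^2)) := by
        linear_combination hσsq
      rw [hdiff, abs_of_nonneg (mul_nonneg (by linarith) (by linarith))]
      have hstep : 4*t*(-(Real.log (Erfc σ) + σ^2)) ≤ 4*t*(K + 2*σ) :=
        mul_le_mul_of_nonneg_left hL2 (by linarith)
      have h9 : 8*t*σ ≤ 4*Real.sqrt p'*δ*Real.sqrt t := by
        have hxx : Real.sqrt p'*(x i1)*Real.sqrt t ≤ Real.sqrt p'*δ*Real.sqrt t := by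
          gcongr
        linarith [h8, hxx]
      linarith
    exact lt_of_le_of_lt key hlt

end
end

section
/- Let N ≥ 2, 1 < p < ∞, p' = p/(p−1). Let Ω ⊆ ℝ^N be a domain with boundary Γ, let x ∈ Ω and R > 0 be such that B̄_R(x) ∩ (ℝ^N \ Ω) = {y_x} for some point y_x ∈ Γ. Let u be a bounded viscosity solution of problem (P) in Ω with 0 < u < 1 on Ω×(0,∞), and let v : Ω̄×(0,∞) → ℝ be defined by Erfc(√p'·v(z,t)/(2√t)) = u(z,t). Assume sup_{z∈B̄_R(x)} |v(z,t) − d_Γ(z)|/√t → 0 as t → 0⁺. Then the ∞-mean μ_∞(u(·,t)) = (1/2)·(min_{z∈B̄_R(x)} u(z,t) + max_{z∈B̄_R(x)} u(z,t)) satisfies lim_{t→0⁺} μ_∞(u(·,t)) = 1/2. -/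
open MeasureTheory Metric Set Filter
open scoped Topology ENNReal NNReal Real Classical

noncomputable section

lemma erfc_tendsto_zero : Filter.Tendsto Erfc Filter.atTop (𝓝 0) := by
  have hint : MeasureTheory.Integrable (fun τ : ℝ => Real.exp (-τ ^ 2)) := by
    simpa using integrable_exp_neg_mul_sq (one_pos)
  have h0 : Tendsto
      (fun σ : ℝ => ∫ τ : ℝ, Set.indicator (Set.Ioi σ) (fun τ => Real.exp (-τ ^ 2)) τ)
      atTop (𝓝 (∫ _ : ℝ, (0 : ℝ))) := by
    apply MeasureTheory.tendsto_integral_filter_of_dominated_convergence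
      (fun τ => Real.exp (-τ ^ 2))
    · exact Filter.Eventually.of_forall fun σ =>
        hint.aestronglyMeasurable.indicator measurableSet_Ioi
    · refine Filter.Eventually.of_forall fun σ => Filter.Eventually.of_forall fun τ => ?_
      rw [Set.indicator_apply]
      split
      · simp [abs_of_nonneg (Real.exp_pos _).le]
      · simpa using (Real.exp_pos _).le
    · exact hint
    · refine Filter.Eventually.of_forall fun τ => ?_
      have hev : ∀ᶠ σ in atTop,
          Set.indicator (Set.Ioi σ) (fun τ => Real.exp (-τ ^ 2)) τ = (0 : ℝ) := by
        filter_upwards [eventually_ge_atTop τ] with σ hσ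
        simp [Set.indicator_apply, not_lt.mpr hσ]
      exact Tendsto.congr' (hev.mono fun σ h => h.symm) tendsto_const_nhds
  have h : Tendsto (fun σ : ℝ => ∫ τ in Set.Ioi σ, Real.exp (-τ ^ 2)) atTop (𝓝 0) := by
    simpa [MeasureTheory.integral_indicator measurableSet_Ioi] using h0
  have := h.const_mul (2 / Real.sqrt π)
  rw [show Erfc = fun σ => (2 / Real.sqrt π) * ∫ τ in Set.Ioi σ, Real.exp (-τ^2) from rfl]
  simpa using this

/-- the `∞`-mean of `u(·,t)` on a ball touching the boundary tends to `1/2`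
as `t → 0⁺`. -/
theorem stmt17 (N : ℕ) (hN : 2 ≤ N) (p : ℝ) (hp : 1 < p)
    (Ω : Set (EuclideanSpace ℝ (Fin N))) (hΩo : IsOpen Ω) (hΩc : IsConnected Ω)
    (x : EuclideanSpace ℝ (Fin N)) (hx : x ∈ Ω) (R : ℝ) (hR : 0 < R)
    (yx : EuclideanSpace ℝ (Fin N)) (hyx : yx ∈ frontier Ω)
    (htouch : Metric.closedBall x R ∩ Ωᶜ = {yx})
    (u : EuclideanSpace ℝ (Fin N) → ℝ → ℝ) (hu : IsSolP p Ω u)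
    (hupos : ∀ z ∈ Ω, ∀ t : ℝ, 0 < t → 0 < u z t ∧ u z t < 1)
    (v : EuclideanSpace ℝ (Fin N) → ℝ → ℝ)
    (hv : ∀ z ∈ closure Ω, ∀ t : ℝ, 0 < t →
      Erfc (Real.sqrt (p/(p-1)) * v z t / (2 * Real.sqrt t)) = u z t)
    (hvd : ∀ ε : ℝ, 0 < ε → ∃ t₀ : ℝ, 0 < t₀ ∧ ∀ t : ℝ, 0 < t → t < t₀ →
      ∀ z ∈ Metric.closedBall x R,
        |v z t - Metric.infDist z (frontier Ω)| ≤ ε * Real.sqrt t) :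
    Filter.Tendsto (fun t : ℝ =>
        (1/2) * (sInf ((fun z => u z t) '' Metric.closedBall x R) +
          sSup ((fun z => u z t) '' Metric.closedBall x R)))
      (𝓝[>] (0:ℝ)) (𝓝 (1/2)) := by
  -- Every point of the closed ball is either in Ω or equals yx
  have hmem : ∀ z ∈ Metric.closedBall x R, z ∈ Ω ∨ z = yx := by
    intro z hz
    by_cases hzΩ : z ∈ Ω
    · exact Or.inl hzΩ
    · right
      have : z ∈ Metric.closedBall x R ∩ Ωᶜ := ⟨hz, hzΩ⟩
      rw [htouch] at this
      exact this
  have hyxball : yx ∈ Metric.closedBall x R := by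
    have : yx ∈ Metric.closedBall x R ∩ Ωᶜ := by rw [htouch]; exact rfl
    exact this.1
  have hxball : x ∈ Metric.closedBall x R := Metric.mem_closedBall_self hR.le
  have huyx : ∀ t : ℝ, 0 < t → u yx t = 1 := fun t ht => hu.2.2.2.2 yx hyx t ht
  set S : ℝ → Set ℝ := fun t => (fun z => u z t) '' Metric.closedBall x R with hS
  -- bounds on u over the ball
  have hub : ∀ t : ℝ, 0 < t → ∀ r ∈ S t, 0 ≤ r ∧ r ≤ 1 := by
    intro t ht r hr
    obtain ⟨z, hz, rfl⟩ := hr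
    show 0 ≤ u z t ∧ u z t ≤ 1
    rcases hmem z hz with hzΩ | rfl
    · exact ⟨(hupos z hzΩ t ht).1.le, (hupos z hzΩ t ht).2.le⟩
    · rw [huyx t ht]; norm_num
  have hne : ∀ t : ℝ, (S t).Nonempty := fun t => ⟨u x t, x, hxball, rfl⟩
  have hbdd : ∀ t : ℝ, 0 < t → BddBelow (S t) ∧ BddAbove (S t) := by
    intro t ht
    exact ⟨⟨0, fun r hr => (hub t ht r hr).1⟩, ⟨1, fun r hr => (hub t ht r hr).2⟩⟩
  -- the sup equals 1 for all positive t
  have hsup : ∀ t : ℝ, 0 < t → sSup (S t) = 1 := by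
    intro t ht
    refine le_antisymm (csSup_le (hne t) fun r hr => (hub t ht r hr).2) ?_
    have h1 : (1 : ℝ) ∈ S t := ⟨yx, hyxball, huyx t ht⟩
    exact le_csSup (hbdd t ht).2 h1
  -- distance of x to the boundary is positive
  have hxfr : x ∉ frontier Ω := by
    rw [hΩo.frontier_eq]
    exact fun h => h.2 hx
  have hd : 0 < Metric.infDist x (frontier Ω) :=
    (isClosed_frontier.notMem_iff_infDist_pos ⟨yx, hyx⟩).1 hxfr
  set d : ℝ := Metric.infDist x (frontier Ω) with hdd
  set q : ℝ := Real.sqrt (p / (p - 1)) with hq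
  have hq0 : 0 < q := Real.sqrt_pos.2 (div_pos (lt_trans one_pos hp) (sub_pos.2 hp))
  obtain ⟨t₀, ht₀, hvt₀⟩ := hvd 1 one_pos
  set T : ℝ := min t₀ ((d / 2) ^ 2) with hT
  have hT0 : 0 < T := lt_min ht₀ (by positivity)
  -- lower bound on v x t
  have hvlow : ∀ t : ℝ, 0 < t → t < T → d / 2 ≤ v x t := by
    intro t ht htT
    have h1 := hvt₀ t ht (lt_of_lt_of_le htT (min_le_left _ _)) x hxball
    have h2 : Real.sqrt t < d / 2 := by
      have : Real.sqrt t < Real.sqrt ((d / 2) ^ 2) :=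
        Real.sqrt_lt_sqrt ht.le (lt_of_lt_of_le htT (min_le_right _ _))
      rwa [Real.sqrt_sq (by positivity)] at this
    have := (abs_le.1 h1).1
    rw [one_mul] at h1
    have := (abs_le.1 h1).1
    linarith
  -- the Erfc argument goes to infinity
  have hg : Tendsto (fun t => q * v x t / (2 * Real.sqrt t)) (𝓝[>] (0 : ℝ)) atTop := by
    have hsqrt : Tendsto (fun t : ℝ => Real.sqrt t) (𝓝[>] (0 : ℝ)) (𝓝[>] (0 : ℝ)) := by
      apply tendsto_nhdsWithin_of_tendsto_nhds_of_eventually_within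
      · simpa using (Real.continuous_sqrt.tendsto 0).mono_left nhdsWithin_le_nhds
      · filter_upwards [self_mem_nhdsWithin] with t ht
        exact Real.sqrt_pos.2 ht
    have hinv : Tendsto (fun t : ℝ => (Real.sqrt t)⁻¹) (𝓝[>] (0 : ℝ)) atTop :=
      tendsto_inv_nhdsGT_zero.comp hsqrt
    have hbase : Tendsto (fun t : ℝ => q * d / 4 * (Real.sqrt t)⁻¹) (𝓝[>] (0 : ℝ)) atTop :=
      hinv.const_mul_atTop (by positivity)
    refine tendsto_atTop_mono' _ ?_ hbase
    filter_upwards [Ioo_mem_nhdsGT_of_mem (by constructor <;> simp [hT0.le, hT0] : (0:ℝ) ∈ Set.Ico 0 T)] with t ht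
    have ht0 : 0 < t := ht.1
    have hst : 0 < Real.sqrt t := Real.sqrt_pos.2 ht0
    have hvl := hvlow t ht0 ht.2
    have key : q * (d / 2) / (2 * Real.sqrt t) ≤ q * v x t / (2 * Real.sqrt t) := by
      gcongr
    have heq : q * d / 4 * (Real.sqrt t)⁻¹ = q * (d / 2) / (2 * Real.sqrt t) := by
      field_simp; ring
    rw [heq]; exact key
  -- hence u x t → 0
  have hux : Tendsto (fun t => u x t) (𝓝[>] (0 : ℝ)) (𝓝 0) := by
    have := erfc_tendsto_zero.comp hg
    refine this.congr' ?_
    filter_upwards [self_mem_nhdsWithin] with t ht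
    exact hv x (subset_closure hx) t ht
  -- squeeze: sInf → 0
  have hinf : Tendsto (fun t => sInf (S t)) (𝓝[>] (0 : ℝ)) (𝓝 0) := by
    apply tendsto_of_tendsto_of_tendsto_of_le_of_le' tendsto_const_nhds hux
    · filter_upwards [self_mem_nhdsWithin] with t ht
      exact le_csInf (hne t) fun r hr => (hub t ht r hr).1
    · filter_upwards [self_mem_nhdsWithin] with t ht
      exact csInf_le (hbdd t ht).1 ⟨x, hxball, rfl⟩
  -- conclusion
  have hmain : Tendsto (fun t => (1/2 : ℝ) * (sInf (S t) + 1)) (𝓝[>] (0 : ℝ))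
      (𝓝 ((1/2 : ℝ) * (0 + 1))) := (hinf.add tendsto_const_nhds).const_mul (1/2)
  have : Tendsto (fun t => (1/2 : ℝ) * (sInf (S t) + sSup (S t))) (𝓝[>] (0 : ℝ))
      (𝓝 ((1/2 : ℝ) * (0 + 1))) := by
    refine hmain.congr' ?_
    filter_upwards [self_mem_nhdsWithin] with t ht
    rw [hsup t ht]
  simpa using this

end
end
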